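/- With the notation below, for every x, y ∈ O_{K,S}^× there exist a multi-index β ∈ I = {0, …, 2r+1}^k and an index j₀ ∈ {1, …, 2s_∞+1} such that, for every i ∈ {1, …, c_K} and every place 𝔭 ∈ S (finite or infinite): ord_𝔭(P^β x) ≠ ord_𝔭(q_{i,j₀}) and ord_𝔭(P^β y) ≠ ord_𝔭(q_{i,j₀} x). -/

import Mathlib

open FirstOrder Language IsDedekindDomain Polynomial

set_option linter.unusedSectionVars false

namespace Paper

section HolomorphyRings

variable {R : Type*} [CommRing R] [IsDedekindDomain R]
variable {K : Type*} [Field K] [Algebra R K] [IsFractionRing R K]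

/-- The subring of elements of `K` that are integral at every prime satisfying `P`. -/
def integralAt (P : HeightOneSpectrum R → Prop) : Subring K where
  carrier := {x : K | ∀ v : HeightOneSpectrum R, P v → v.valuation K x ≤ 1}
  zero_mem' := fun v _ => by simp only [Valuation.map_zero]; exact zero_le_one
  one_mem' := fun v _ => le_of_eq (Valuation.map_one _)
  add_mem' := fun {x y} hx hy v hv =>
    le_trans (Valuation.map_add _ x y) (max_le (hx v hv) (hy v hv))
  mul_mem' := fun {x y} hx hy v hv => by
    rw [Valuation.map_mul]; exact mul_le_one' (hx v hv) (hy v hv)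
  neg_mem' := fun {x} hx v hv => by rw [Valuation.map_neg]; exact hx v hv

theorem mem_integralAt {P : HeightOneSpectrum R → Prop} {x : K} :
    x ∈ (integralAt P : Subring K) ↔
      ∀ v : HeightOneSpectrum R, P v → v.valuation K x ≤ 1 :=
  Iff.rfl

theorem algebraMap_mem_integralAt (P : HeightOneSpectrum R → Prop) (r : R) :
    algebraMap R K r ∈ (integralAt P : Subring K) :=
  fun v _ => v.valuation_le_one r

/-- The normalized additive `v`-adic valuation of an element of `K`, as an integer
(with junk value `0` at `x = 0`). -/
noncomputable def ordAt (v : HeightOneSpectrum R) (x : K) : ℤ :=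
  if h : v.valuation K x = 0 then 0 else - Multiplicative.toAdd (WithZero.unzero h)

variable (v : HeightOneSpectrum R)

theorem val_ne_zero_aux {x : K} (hx : x ≠ 0) : v.valuation K x ≠ 0 := by
  simpa [Valuation.zero_iff] using hx

theorem ordAt_eq {x : K} (hx : x ≠ 0) :
    v.valuation K x = Multiplicative.ofAdd (-(ordAt v x)) := by
  rw [ordAt, dif_neg (val_ne_zero_aux v hx)]
  simp [WithZero.coe_unzero]

theorem ordAt_mul' {x y : K} (hx : x ≠ 0) (hy : y ≠ 0) :
    ordAt v (x * y) = ordAt v x + ordAt v y := by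
  have h := ordAt_eq v (mul_ne_zero hx hy)
  rw [Valuation.map_mul, ordAt_eq v hx, ordAt_eq v hy] at h
  rw [← WithZero.coe_mul, WithZero.coe_inj, ← ofAdd_add] at h
  have := Multiplicative.ofAdd.injective h
  omega

theorem ordAt_nonneg_iff {x : K} (hx : x ≠ 0) : 0 ≤ ordAt v x ↔ v.valuation K x ≤ 1 := by
  rw [ordAt_eq v hx, ← WithZero.coe_one, WithZero.coe_le_coe, ← ofAdd_zero,
    Multiplicative.ofAdd_le]
  omega

theorem ordAt_pos_iff {x : K} (hx : x ≠ 0) : 0 < ordAt v x ↔ v.valuation K x < 1 := by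
  rw [ordAt_eq v hx, ← WithZero.coe_one, WithZero.coe_lt_coe, ← ofAdd_zero,
    Multiplicative.ofAdd_lt]
  omega

theorem ordAt_eq_zero_iff {x : K} (hx : x ≠ 0) : ordAt v x = 0 ↔ v.valuation K x = 1 := by
  rw [ordAt_eq v hx, ← WithZero.coe_one, WithZero.coe_inj]
  constructor
  · intro h; rw [h]; simp
  · intro h
    have := Multiplicative.ofAdd.injective
      (by simpa using h.symm : Multiplicative.ofAdd (0:ℤ) = Multiplicative.ofAdd (-(ordAt v x)))
    omega

theorem ordAt_prod {ι : Type*} (s : Finset ι) (f : ι → K) (hf : ∀ i ∈ s, f i ≠ 0) :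
    ordAt v (∏ i ∈ s, f i) = ∑ i ∈ s, ordAt v (f i) := by
  classical
  induction s using Finset.cons_induction with
  | empty =>
    simp only [Finset.prod_empty, Finset.sum_empty]
    rw [ordAt_eq_zero_iff v one_ne_zero]; exact Valuation.map_one _
  | cons a s ha ih =>
    rw [Finset.prod_cons, Finset.sum_cons,
      ordAt_mul' v (hf a (Finset.mem_cons_self a s))
        (Finset.prod_ne_zero_iff.mpr fun i hi => hf i (Finset.mem_cons_of_mem hi)),
      ih fun i hi => hf i (Finset.mem_cons_of_mem hi)]

theorem ordAt_pow {x : K} (hx : x ≠ 0) (n : ℕ) : ordAt v (x ^ n) = n * ordAt v x := by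
  induction n with
  | zero =>
    simp only [pow_zero, Nat.cast_zero, zero_mul]
    rw [ordAt_eq_zero_iff v one_ne_zero]; exact Valuation.map_one _
  | succ n ih =>
    rw [pow_succ, ordAt_mul' v (pow_ne_zero _ hx) hx, ih]
    push_cast; ring

end HolomorphyRings

section FunctionFieldSetting

variable (p : ℕ) [Fact p.Prime]
variable (K : Type*) [Field K] [Algebra (RatFunc (ZMod p)) K]
  [Algebra (Polynomial (ZMod p)) K]
  [IsScalarTower (Polynomial (ZMod p)) (RatFunc (ZMod p)) K]
  [FunctionField (ZMod p) K]
  [Algebra.IsSeparable (RatFunc (ZMod p)) K]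

/-- The ring of integers of the function field `K`: the integral closure of
`𝔽_p[t]` in `K`. -/
noncomputable abbrev OK := FunctionField.ringOfIntegers (ZMod p) K

/-- The image in `O_K` of a polynomial over `𝔽_p`. -/
noncomputable def polyToOK (f : Polynomial (ZMod p)) : OK p K :=
  ⟨algebraMap (Polynomial (ZMod p)) K f, isIntegral_algebraMap⟩

/-- The holomorphy ring `O_{K,S}` when `S` consists of all the infinite places
together with the finite set `Sf` of finite places: the elements of `K` integral
at every finite place outside `Sf`. -/
noncomputable abbrev holoFin (Sf : Finset (HeightOneSpectrum (OK p K))) : Subring K :=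
  integralAt (fun v => v ∉ Sf)

/-- The holomorphy ring `O_{K,S}` when `S` is the complement of the finite set `T`
of finite places: the elements of `K` integral at each prime of `T`. -/
noncomputable abbrev holoCof (T : Finset (HeightOneSpectrum (OK p K))) : Subring K :=
  integralAt (fun v => v ∈ T)

theorem polyMem_holoFin (Sf : Finset (HeightOneSpectrum (OK p K)))
    (f : Polynomial (ZMod p)) :
    algebraMap (Polynomial (ZMod p)) K f ∈ holoFin p K Sf :=
  algebraMap_mem_integralAt _ (polyToOK p K f)

/-- The image of `t` in `K`. -/
noncomputable def tK : K := algebraMap (RatFunc (ZMod p)) K RatFunc.X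

theorem tK_eqPoly : tK p K = algebraMap (Polynomial (ZMod p)) K Polynomial.X := by
  rw [IsScalarTower.algebraMap_apply (Polynomial (ZMod p)) (RatFunc (ZMod p)) K,
    RatFunc.algebraMap_X]
  rfl

theorem tK_mem (Pr : HeightOneSpectrum (OK p K) → Prop) :
    tK p K ∈ (integralAt Pr : Subring K) := by
  rw [tK_eqPoly]
  exact algebraMap_mem_integralAt _ (polyToOK p K Polynomial.X)

/-- The valuation subring at infinity of `𝔽_p(t)` (consisting of the rational
functions of degree at most `0`). -/
noncomputable def inftyVSR : ValuationSubring (RatFunc (ZMod p)) :=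
  letI := Classical.decEq (RatFunc (ZMod p))
  (FunctionField.inftyValuation (ZMod p)).valuationSubring

/-- The infinite places of `K`: the valuation subrings of `K` lying above the
place at infinity of `𝔽_p(t)`. -/
noncomputable def InfPlace : Type _ :=
  {V : ValuationSubring K // V.comap (algebraMap (RatFunc (ZMod p)) K) = inftyVSR p}

/-- The number of infinite places of `K`. -/
noncomputable def numInfPlaces : ℕ := Nat.card (InfPlace p K)

/-- The infinite places of `K` together with their normalized (surjective,
`ℤ`-valued) additive valuations: `W` enumerates, without repetition, all the
valuation subrings of `K` lying above the place at infinity of `𝔽_p(t)`, and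
`ord i` is the corresponding normalized additive valuation. -/
structure InfData where
  /-- the number `s_∞` of infinite places -/
  s : ℕ
  pos : 0 < s
  /-- the valuation subrings at the infinite places -/
  W : Fin s → ValuationSubring K
  inj : Function.Injective W
  above : ∀ i, (W i).comap (algebraMap (RatFunc (ZMod p)) K) = inftyVSR p
  complete : ∀ V : ValuationSubring K,
    V.comap (algebraMap (RatFunc (ZMod p)) K) = inftyVSR p → ∃ i, V = W i
  /-- the normalized additive valuations `ord_{∞_i}` -/
  ord : Fin s → K → ℤ
  ord_mul : ∀ i (x y : K), x ≠ 0 → y ≠ 0 → ord i (x * y) = ord i x + ord i y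
  ord_add : ∀ i (x y : K), x ≠ 0 → y ≠ 0 → x + y ≠ 0 →
    min (ord i x) (ord i y) ≤ ord i (x + y)
  ord_surj : ∀ i (n : ℤ), ∃ x : K, x ≠ 0 ∧ ord i x = n
  mem_iff : ∀ i (x : K), x ≠ 0 → (x ∈ W i ↔ 0 ≤ ord i x)

/-- `ord_min(x) = min {ord_{∞_i}(x) : i = 1, …, s_∞}`. -/
noncomputable def ordMin (I : InfData p K) (x : K) : ℤ :=
  haveI : Nonempty (Fin I.s) := Fin.pos_iff_nonempty.mp I.pos
  Finset.univ.inf' Finset.univ_nonempty (fun i => I.ord i x)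

variable [Algebra (ZMod p) K] [IsScalarTower (ZMod p) (RatFunc (ZMod p)) K]

/-- The number of elements of the field of constants `C_K` of `K` (the integral
closure of `𝔽_p` in `K`). -/
noncomputable def constCard : ℕ := Nat.card (integralClosure (ZMod p) K)

/-- The degree `deg_K(𝔭) = dim_{C_K}(O_𝔭/𝔭)` of a finite place. -/
noncomputable def degFin (v : HeightOneSpectrum (OK p K)) : ℕ :=
  Nat.log (constCard p K) (Nat.card ((OK p K) ⧸ v.asIdeal))

/-- The degree `deg_K` of an infinite place, computed from the residue field of
its valuation subring. -/
noncomputable def degInfPlace (V : ValuationSubring K) : ℕ :=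
  Nat.log (constCard p K) (Nat.card (IsLocalRing.ResidueField V))

/-- `D = max {deg_K(𝔭) : 𝔭 ∈ S}`, over the finite and infinite places of `S`. -/
noncomputable def maxDeg (Sf : Finset (HeightOneSpectrum (OK p K)))
    (I : InfData p K) : ℕ :=
  max (Sf.sup (degFin p K)) (Finset.univ.sup (fun i => degInfPlace p K (I.W i)))

/-- The ideal class number `h_K` of `O_K`. -/
noncomputable def classNum : ℕ := Nat.card (ClassGroup (OK p K))

/-- `[C_K : 𝔽_p]`. -/
noncomputable def constDeg : ℕ := Nat.log p (constCard p K)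


/-! ### Auxiliary lemmas for the pigeonhole argument -/

theorem aK_eq_OK (f : Polynomial (ZMod p)) :
    algebraMap (Polynomial (ZMod p)) K f = algebraMap (OK p K) K (polyToOK p K f) := rfl

theorem polyToOK_eq_algebraMap (f : Polynomial (ZMod p)) :
    polyToOK p K f = algebraMap (Polynomial (ZMod p)) (OK p K) f := rfl

theorem aK_ne_zero {f : Polynomial (ZMod p)} (hf : f ≠ 0) :
    algebraMap (Polynomial (ZMod p)) K f ≠ 0 := by
  rw [IsScalarTower.algebraMap_apply (Polynomial (ZMod p)) (RatFunc (ZMod p)) K]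
  exact map_ne_zero_of_mem_nonZeroDivisors _ (RingHom.injective _)
    (mem_nonZeroDivisors_of_ne_zero (RatFunc.algebraMap_ne_zero hf))

theorem polyToOK_ne_zero {f : Polynomial (ZMod p)} (hf : f ≠ 0) :
    polyToOK p K f ≠ 0 := by
  intro h
  exact aK_ne_zero p K hf (by rw [aK_eq_OK, h, map_zero])

theorem val_aK_lt_one_iff (v : HeightOneSpectrum (OK p K)) (f : Polynomial (ZMod p)) :
    v.valuation K (algebraMap (Polynomial (ZMod p)) K f) < 1 ↔ polyToOK p K f ∈ v.asIdeal := by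
  rw [aK_eq_OK, v.valuation_lt_one_iff_dvd, Ideal.dvd_span_singleton]

theorem ordAt_aK_nonneg (v : HeightOneSpectrum (OK p K)) {f : Polynomial (ZMod p)}
    (hf : f ≠ 0) : 0 ≤ ordAt v (algebraMap (Polynomial (ZMod p)) K f) := by
  rw [ordAt_nonneg_iff v (aK_ne_zero p K hf), aK_eq_OK]
  exact v.valuation_le_one _

theorem ordAt_aK_pos (v : HeightOneSpectrum (OK p K)) {f : Polynomial (ZMod p)}
    (hf : f ≠ 0) (h : polyToOK p K f ∈ v.asIdeal) :
    0 < ordAt v (algebraMap (Polynomial (ZMod p)) K f) := by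
  rw [ordAt_pos_iff v (aK_ne_zero p K hf), val_aK_lt_one_iff]
  exact h

theorem ordAt_aK_eq_zero (v : HeightOneSpectrum (OK p K)) {f : Polynomial (ZMod p)}
    (hf : f ≠ 0) (h : polyToOK p K f ∉ v.asIdeal) :
    ordAt v (algebraMap (Polynomial (ZMod p)) K f) = 0 := by
  rw [ordAt_eq_zero_iff v (aK_ne_zero p K hf)]
  have h1 : v.valuation K (algebraMap (Polynomial (ZMod p)) K f) ≤ 1 := by
    rw [aK_eq_OK]; exact v.valuation_le_one _
  rcases lt_or_eq_of_le h1 with h2 | h2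
  · exact absurd ((val_aK_lt_one_iff p K v f).mp h2) h
  · exact h2

theorem mem_of_ordAt_ne_zero (v : HeightOneSpectrum (OK p K)) {f : Polynomial (ZMod p)}
    (hf : f ≠ 0) (h : ordAt v (algebraMap (Polynomial (ZMod p)) K f) ≠ 0) :
    polyToOK p K f ∈ v.asIdeal := by
  by_contra hc
  exact h (ordAt_aK_eq_zero p K v hf hc)

theorem dvd_of_both_mem (v : HeightOneSpectrum (OK p K)) {f g : Polynomial (ZMod p)}
    (hf : Irreducible f)
    (hfv : polyToOK p K f ∈ v.asIdeal) (hgv : polyToOK p K g ∈ v.asIdeal) :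
    f ∣ g := by
  set J := Ideal.comap (algebraMap (Polynomial (ZMod p)) (OK p K)) v.asIdeal with hJ
  haveI : J.IsPrime := Ideal.IsPrime.comap _
  have hfJ : f ∈ J := by rw [hJ, Ideal.mem_comap, ← polyToOK_eq_algebraMap]; exact hfv
  have hgJ : g ∈ J := by rw [hJ, Ideal.mem_comap, ← polyToOK_eq_algebraMap]; exact hgv
  have hmax := PrincipalIdealRing.isMaximal_of_irreducible hf
  have hspan : Ideal.span {f} = J :=
    hmax.eq_of_le (Ideal.IsPrime.ne_top ‹J.IsPrime›)
      ((Ideal.span_singleton_le_iff_mem J).mpr hfJ)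
  rw [← Ideal.mem_span_singleton, hspan]
  exact hgJ

theorem mem_of_dvd_mem (v : HeightOneSpectrum (OK p K)) {f g : Polynomial (ZMod p)}
    (hf : Irreducible f) (hg : Irreducible g) (hdvd : f ∣ g)
    (h : polyToOK p K f ∈ v.asIdeal) : polyToOK p K g ∈ v.asIdeal := by
  obtain ⟨u, hu⟩ := hf.associated_of_dvd hg hdvd
  rw [polyToOK_eq_algebraMap, ← hu, map_mul]
  exact Ideal.mul_mem_right _ _ (by rw [← polyToOK_eq_algebraMap]; exact h)

theorem finite_above {f : Polynomial (ZMod p)} (hf : f ≠ 0) :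
    {v : HeightOneSpectrum (OK p K) | polyToOK p K f ∈ v.asIdeal}.Finite := by
  have h0 : Ideal.span {polyToOK p K f} ≠ 0 := by
    rw [Ne, Ideal.zero_eq_bot, Ideal.span_singleton_eq_bot]
    exact polyToOK_ne_zero p K hf
  have := Ideal.finite_factors h0
  simpa only [Ideal.dvd_span_singleton] using this

theorem ord_one (I : InfData p K) (ℓ : Fin I.s) : I.ord ℓ 1 = 0 := by
  have := I.ord_mul ℓ 1 1 one_ne_zero one_ne_zero
  rw [mul_one] at this; omega

theorem ord_inv (I : InfData p K) (ℓ : Fin I.s) {x : K} (hx : x ≠ 0) :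
    I.ord ℓ x⁻¹ = - I.ord ℓ x := by
  have := I.ord_mul ℓ x x⁻¹ hx (inv_ne_zero hx)
  rw [mul_inv_cancel₀ hx, ord_one p K I ℓ] at this; omega

theorem mem_inftyVSR_iff {u : RatFunc (ZMod p)} (hu : u ≠ 0) :
    u ∈ inftyVSR p ↔ u.intDegree ≤ 0 := by
  letI := Classical.decEq (RatFunc (ZMod p))
  have h : u ∈ inftyVSR p ↔ FunctionField.inftyValuation (ZMod p) u ≤ 1 := Iff.rfl
  rw [h]
  show RatFunc.inftyValuation (ZMod p) u ≤ 1 ↔ _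
  rw [RatFunc.inftyValuation_apply, RatFunc.inftyValuation_of_nonzero _ hu,
    ← WithZero.exp_zero, WithZero.exp_le_exp]

theorem intDegree_div_poly {f g : Polynomial (ZMod p)} (hf : f ≠ 0) (hg : g ≠ 0) :
    (algebraMap (Polynomial (ZMod p)) (RatFunc (ZMod p)) f /
      algebraMap (Polynomial (ZMod p)) (RatFunc (ZMod p)) g).intDegree =
      (f.natDegree : ℤ) - g.natDegree := by
  have hF := RatFunc.algebraMap_ne_zero hf
  have hG := RatFunc.algebraMap_ne_zero hg
  have hGi : (algebraMap (Polynomial (ZMod p)) (RatFunc (ZMod p)) g)⁻¹ ≠ 0 := inv_ne_zero hG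
  have h1 : (algebraMap (Polynomial (ZMod p)) (RatFunc (ZMod p)) g)⁻¹.intDegree =
      - (algebraMap (Polynomial (ZMod p)) (RatFunc (ZMod p)) g).intDegree := by
    have := RatFunc.intDegree_mul hG hGi
    rw [mul_inv_cancel₀ hG, RatFunc.intDegree_one] at this; omega
  rw [div_eq_mul_inv, RatFunc.intDegree_mul hF hGi, h1, RatFunc.intDegree_polynomial,
    RatFunc.intDegree_polynomial]
  ring

theorem ord_sub_nonneg_iff (I : InfData p K) (ℓ : Fin I.s) {f g : Polynomial (ZMod p)}
    (hf : f ≠ 0) (hg : g ≠ 0) :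
    0 ≤ I.ord ℓ (algebraMap (Polynomial (ZMod p)) K f) -
      I.ord ℓ (algebraMap (Polynomial (ZMod p)) K g) ↔ f.natDegree ≤ g.natDegree := by
  set F := algebraMap (Polynomial (ZMod p)) (RatFunc (ZMod p)) f with hFdef
  set G := algebraMap (Polynomial (ZMod p)) (RatFunc (ZMod p)) g with hGdef
  have hF : F ≠ 0 := RatFunc.algebraMap_ne_zero hf
  have hG : G ≠ 0 := RatFunc.algebraMap_ne_zero hg
  have hFK : algebraMap (RatFunc (ZMod p)) K F = algebraMap (Polynomial (ZMod p)) K f :=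
    (IsScalarTower.algebraMap_apply (Polynomial (ZMod p)) (RatFunc (ZMod p)) K f).symm
  have hGK : algebraMap (RatFunc (ZMod p)) K G = algebraMap (Polynomial (ZMod p)) K g :=
    (IsScalarTower.algebraMap_apply (Polynomial (ZMod p)) (RatFunc (ZMod p)) K g).symm
  have hfk : algebraMap (Polynomial (ZMod p)) K f ≠ 0 := aK_ne_zero p K hf
  have hgk : algebraMap (Polynomial (ZMod p)) K g ≠ 0 := aK_ne_zero p K hg
  have key : algebraMap (RatFunc (ZMod p)) K (F / G) =
      algebraMap (Polynomial (ZMod p)) K f * (algebraMap (Polynomial (ZMod p)) K g)⁻¹ := by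
    rw [map_div₀, hFK, hGK, div_eq_mul_inv]
  have hu : algebraMap (Polynomial (ZMod p)) K f *
      (algebraMap (Polynomial (ZMod p)) K g)⁻¹ ≠ 0 :=
    mul_ne_zero hfk (inv_ne_zero hgk)
  have hord : I.ord ℓ (algebraMap (Polynomial (ZMod p)) K f *
      (algebraMap (Polynomial (ZMod p)) K g)⁻¹) =
      I.ord ℓ (algebraMap (Polynomial (ZMod p)) K f) -
        I.ord ℓ (algebraMap (Polynomial (ZMod p)) K g) := by
    rw [I.ord_mul ℓ _ _ hfk (inv_ne_zero hgk), ord_inv p K I ℓ hgk]; ring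
  have hFG : F / G ≠ 0 := div_ne_zero hF hG
  calc 0 ≤ I.ord ℓ (algebraMap (Polynomial (ZMod p)) K f) -
        I.ord ℓ (algebraMap (Polynomial (ZMod p)) K g)
      ↔ 0 ≤ I.ord ℓ (algebraMap (Polynomial (ZMod p)) K f *
          (algebraMap (Polynomial (ZMod p)) K g)⁻¹) := by rw [hord]
    _ ↔ algebraMap (Polynomial (ZMod p)) K f *
          (algebraMap (Polynomial (ZMod p)) K g)⁻¹ ∈ I.W ℓ := (I.mem_iff ℓ _ hu).symm
    _ ↔ F / G ∈ (I.W ℓ).comap (algebraMap (RatFunc (ZMod p)) K) := by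
          rw [ValuationSubring.mem_comap, key]
    _ ↔ F / G ∈ inftyVSR p := by rw [I.above ℓ]
    _ ↔ (F / G).intDegree ≤ 0 := mem_inftyVSR_iff p hFG
    _ ↔ f.natDegree ≤ g.natDegree := by rw [intDegree_div_poly p hf hg]; omega

theorem ord_aK_eq_of_deg_eq (I : InfData p K) (ℓ : Fin I.s) {f g : Polynomial (ZMod p)}
    (hf : f ≠ 0) (hg : g ≠ 0) (h : f.natDegree = g.natDegree) :
    I.ord ℓ (algebraMap (Polynomial (ZMod p)) K f) =
      I.ord ℓ (algebraMap (Polynomial (ZMod p)) K g) := by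
  have h1 := (ord_sub_nonneg_iff p K I ℓ hf hg).mpr h.le
  have h2 := (ord_sub_nonneg_iff p K I ℓ hg hf).mpr h.ge
  omega

theorem ord_aK_ne_of_deg_ne (I : InfData p K) (ℓ : Fin I.s) {f g : Polynomial (ZMod p)}
    (hf : f ≠ 0) (hg : g ≠ 0) (h : f.natDegree ≠ g.natDegree) :
    I.ord ℓ (algebraMap (Polynomial (ZMod p)) K f) ≠
      I.ord ℓ (algebraMap (Polynomial (ZMod p)) K g) := by
  rcases Nat.lt_or_ge f.natDegree g.natDegree with hlt | hge
  · intro hc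
    have h2 := (ord_sub_nonneg_iff p K I ℓ hg hf).mp (by omega)
    omega
  · intro hc
    have h2 := (ord_sub_nonneg_iff p K I ℓ hf hg).mp (by omega)
    omega

/-- **Lemma (pigeonhole at the places of `S`).** With `P_1, …, P_k` the irreducible
polynomials below the primes of `S_fin`, `r` an upper bound for the number of primes
above each `P_i`, and `q_{i,j}` (for `i = 1, …, c_K`, `j = 1, …, 2s_∞+1`)
irreducible polynomials not below `S_fin`, with constant degree in `i` and pairwise
distinct degrees in `j`: for all units `x, y` of `O_{K,S}` there are a multi-index
`β ∈ {0, …, 2r+1}^k` and an index `j₀` such that for every `i` and every place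
`𝔭 ∈ S`, `ord_𝔭(P^β x) ≠ ord_𝔭(q_{i,j₀})` and `ord_𝔭(P^β y) ≠ ord_𝔭(q_{i,j₀} x)`. -/
theorem exists_multiindex_pigeonhole (hp2 : p ≠ 2)
    (Sf : Finset (HeightOneSpectrum (OK p K))) (I : InfData p K)
    (k r : ℕ) (P : Fin k → Polynomial (ZMod p))
    (hPirr : ∀ i, Irreducible (P i))
    (hPbelow : ∀ v ∈ Sf, ∃ i, polyToOK p K (P i) ∈ v.asIdeal)
    (hPabove : ∀ i, ∃ v ∈ Sf, polyToOK p K (P i) ∈ v.asIdeal)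
    (hr : ∀ i, Nat.card {v : HeightOneSpectrum (OK p K) // polyToOK p K (P i) ∈ v.asIdeal} ≤ r)
    (Q : Fin (constCard p K) → Fin (2 * I.s + 1) → Polynomial (ZMod p))
    (hQirr : ∀ i j, Irreducible (Q i j))
    (hQnb : ∀ i j, ∀ v ∈ Sf, polyToOK p K (Q i j) ∉ v.asIdeal)
    (hQdeg₁ : ∀ i i' j, (Q i j).natDegree = (Q i' j).natDegree)
    (hQdeg₂ : ∀ i j j', j ≠ j' → (Q i j).natDegree ≠ (Q i j').natDegree) :
    ∀ x y : (holoFin p K Sf)ˣ,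
      ∃ (β : Fin k → Fin (2 * r + 2)) (j₀ : Fin (2 * I.s + 1)),
        ∀ i : Fin (constCard p K),
          (∀ v ∈ Sf,
            ordAt v ((∏ i', algebraMap (Polynomial (ZMod p)) K (P i') ^ (β i' : ℕ)) *
                ((x : holoFin p K Sf) : K)) ≠
              ordAt v (algebraMap (Polynomial (ZMod p)) K (Q i j₀)) ∧
            ordAt v ((∏ i', algebraMap (Polynomial (ZMod p)) K (P i') ^ (β i' : ℕ)) *
                ((y : holoFin p K Sf) : K)) ≠
              ordAt v (algebraMap (Polynomial (ZMod p)) K (Q i j₀) *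
                ((x : holoFin p K Sf) : K))) ∧
          (∀ ℓ : Fin I.s,
            I.ord ℓ ((∏ i', algebraMap (Polynomial (ZMod p)) K (P i') ^ (β i' : ℕ)) *
                ((x : holoFin p K Sf) : K)) ≠
              I.ord ℓ (algebraMap (Polynomial (ZMod p)) K (Q i j₀)) ∧
            I.ord ℓ ((∏ i', algebraMap (Polynomial (ZMod p)) K (P i') ^ (β i' : ℕ)) *
                ((y : holoFin p K Sf) : K)) ≠
              I.ord ℓ (algebraMap (Polynomial (ZMod p)) K (Q i j₀) *
                ((x : holoFin p K Sf) : K))) := by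
  intro x y
  classical
  have hX : ((x : holoFin p K Sf) : K) ≠ 0 := by
    have h1 := congrArg (fun z : holoFin p K Sf => (z : K)) x.mul_inv
    push_cast at h1
    exact left_ne_zero_of_mul_eq_one h1
  have hY : ((y : holoFin p K Sf) : K) ≠ 0 := by
    have h1 := congrArg (fun z : holoFin p K Sf => (z : K)) y.mul_inv
    push_cast at h1
    exact left_ne_zero_of_mul_eq_one h1
  set X : K := ((x : holoFin p K Sf) : K) with hXdef
  set Y : K := ((y : holoFin p K Sf) : K) with hYdef
  have hPne : ∀ i, P i ≠ 0 := fun i => (hPirr i).ne_zero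
  have hQne : ∀ i j, Q i j ≠ 0 := fun i j => (hQirr i j).ne_zero
  -- notation
  set a : HeightOneSpectrum (OK p K) → Fin k → ℤ :=
    fun v i => ordAt v (algebraMap (Polynomial (ZMod p)) K (P i)) with ha
  set C : HeightOneSpectrum (OK p K) → ℤ := fun v => ∑ i, a v i with hCdef
  -- the finite sets of indices
  set Mv : HeightOneSpectrum (OK p K) → Finset (Fin k) :=
    fun v => Finset.univ.filter (fun i => polyToOK p K (P i) ∈ v.asIdeal) with hMv
  have hMvne : ∀ v ∈ Sf, (Mv v).Nonempty := by
    intro v hv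
    obtain ⟨i, hi⟩ := hPbelow v hv
    exact ⟨i, by simp [hMv, hi]⟩
  set Di : Fin k → Finset (Fin k) :=
    fun i => Finset.univ.filter (fun j => P j ∣ P i) with hDi
  have hDine : ∀ i, (Di i).Nonempty := fun i => ⟨i, by simp [hDi]⟩
  set μ : Fin k → Fin k := fun i => (Di i).min' (hDine i) with hμ
  -- key compatibility
  have hμν : ∀ v (hv : v ∈ Sf) i, polyToOK p K (P i) ∈ v.asIdeal →
      μ i = (Mv v).min' (hMvne v hv) := by
    intro v hv i hi
    have hset : Di i = Mv v := by
      ext j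
      simp only [hDi, hMv, Finset.mem_filter, Finset.mem_univ, true_and]
      constructor
      · intro hj
        exact mem_of_dvd_mem p K v (hPirr i) (hPirr j)
          (((hPirr j).associated_of_dvd (hPirr i) hj).symm.dvd) hi
      · intro hj
        exact dvd_of_both_mem p K v (hPirr j) hj hi
    simp only [hμ, hset]
  -- positivity of C on relevant places
  have havnonneg : ∀ v i, 0 ≤ a v i := fun v i => ordAt_aK_nonneg p K v (hPne i)
  have hCpos : ∀ v m, polyToOK p K (P m) ∈ v.asIdeal → 0 < C v := by
    intro v m hm
    exact Finset.sum_pos' (fun i _ => havnonneg v i)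
      ⟨m, Finset.mem_univ m, ordAt_aK_pos p K v (hPne m) hm⟩
  -- bad sets for the choice of b
  set SfP : Fin k → Finset (HeightOneSpectrum (OK p K)) :=
    fun m => Sf.filter (fun v => polyToOK p K (P m) ∈ v.asIdeal) with hSfP
  have hSfPcard : ∀ m, (SfP m).card ≤ r := by
    intro m
    have hfin := finite_above p K (hPne m)
    haveI := hfin.fintype
    have hsub : SfP m ⊆
        {v : HeightOneSpectrum (OK p K) | polyToOK p K (P m) ∈ v.asIdeal}.toFinset := by
      intro v hv
      rw [Set.mem_toFinset]
      exact (Finset.mem_filter.mp hv).2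
    have h1 := Finset.card_le_card hsub
    rw [Set.toFinset_card, ← Nat.card_eq_fintype_card] at h1
    exact le_trans h1 (hr m)
  set Bad : Fin k → Finset (Fin (2 * r + 2)) := fun m =>
    (SfP m).biUnion (fun v =>
      (Finset.univ.filter fun bb : Fin (2 * r + 2) =>
        ((bb : ℕ) : ℤ) * C v = - ordAt v X) ∪
      (Finset.univ.filter fun bb : Fin (2 * r + 2) =>
        ((bb : ℕ) : ℤ) * C v = ordAt v X - ordAt v Y)) with hBad
  have hBadcard : ∀ m, (Bad m).card ≤ 2 * r := by
    intro m
    have hone : ∀ (v : HeightOneSpectrum (OK p K)), v ∈ SfP m → ∀ (t : ℤ),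
        (Finset.univ.filter fun bb : Fin (2 * r + 2) =>
          ((bb : ℕ) : ℤ) * C v = t).card ≤ 1 := by
      intro v hv t
      apply Finset.card_le_one.mpr
      intro bb hbb cc hcc
      rw [Finset.mem_filter] at hbb hcc
      have hC0 : C v ≠ 0 :=
        ne_of_gt (hCpos v m (Finset.mem_filter.mp hv).2)
      have := mul_right_cancel₀ hC0 (hbb.2.trans hcc.2.symm)
      exact Fin.ext (by exact_mod_cast this)
    calc (Bad m).card ≤ ∑ v ∈ SfP m,
        ((Finset.univ.filter fun bb : Fin (2 * r + 2) =>
          ((bb : ℕ) : ℤ) * C v = - ordAt v X) ∪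
        (Finset.univ.filter fun bb : Fin (2 * r + 2) =>
          ((bb : ℕ) : ℤ) * C v = ordAt v X - ordAt v Y)).card :=
          Finset.card_biUnion_le
      _ ≤ ∑ v ∈ SfP m, 2 := by
          apply Finset.sum_le_sum
          intro v hv
          calc _ ≤ _ := Finset.card_union_le _ _
            _ ≤ 2 := by
              have := hone v hv (- ordAt v X)
              have := hone v hv (ordAt v X - ordAt v Y)
              omega
      _ = 2 * (SfP m).card := by rw [Finset.sum_const, smul_eq_mul, mul_comm]
      _ ≤ 2 * r := by have := hSfPcard m; omega
  have hb : ∀ m, ∃ bb : Fin (2 * r + 2), bb ∉ Bad m := by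
    intro m
    by_contra h
    push_neg at h
    have hsub : (Finset.univ : Finset (Fin (2 * r + 2))) ⊆ Bad m := fun bb _ => h bb
    have := Finset.card_le_card hsub
    rw [Finset.card_univ, Fintype.card_fin] at this
    have := hBadcard m
    omega
  set b : Fin k → Fin (2 * r + 2) := fun m => (hb m).choose with hbdef
  set β : Fin k → Fin (2 * r + 2) := fun i => b (μ i) with hβ
  set N : K := ∏ i', algebraMap (Polynomial (ZMod p)) K (P i') ^ (β i' : ℕ) with hN
  have hNne : N ≠ 0 := by
    rw [hN]
    exact Finset.prod_ne_zero_iff.mpr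
      (fun i _ => pow_ne_zero _ (aK_ne_zero p K (hPne i)))
  -- computation of ordAt v N for v ∈ Sf
  have hordN : ∀ v (hv : v ∈ Sf),
      ordAt v N = (((b ((Mv v).min' (hMvne v hv)) : ℕ) : ℤ)) * C v := by
    intro v hv
    have h1 : ordAt v N = ∑ i, ((β i : ℕ) : ℤ) * a v i := by
      rw [hN, ordAt_prod v _ _
        (fun i _ => pow_ne_zero _ (aK_ne_zero p K (hPne i)))]
      apply Finset.sum_congr rfl
      intro i _
      rw [ordAt_pow v (aK_ne_zero p K (hPne i))]
    rw [h1]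
    have h2 : ∀ i, ((β i : ℕ) : ℤ) * a v i =
        ((b ((Mv v).min' (hMvne v hv)) : ℕ) : ℤ) * a v i := by
      intro i
      by_cases hz : a v i = 0
      · rw [hz, mul_zero, mul_zero]
      · have hmem : polyToOK p K (P i) ∈ v.asIdeal :=
          mem_of_ordAt_ne_zero p K v (hPne i) hz
        rw [hβ]
        simp only []
        rw [hμν v hv i hmem]
    rw [Finset.sum_congr rfl (fun i _ => h2 i), ← Finset.mul_sum, hCdef]
  -- the two finite-place inequalities
  have hfin1 : ∀ v ∈ Sf, ordAt v N ≠ - ordAt v X ∧ ordAt v N ≠ ordAt v X - ordAt v Y := by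
    intro v hv
    have hmmem : polyToOK p K (P ((Mv v).min' (hMvne v hv))) ∈ v.asIdeal := by
      have h := (Mv v).min'_mem (hMvne v hv)
      exact (Finset.mem_filter.mp h).2
    have hvSfP : v ∈ SfP ((Mv v).min' (hMvne v hv)) := Finset.mem_filter.mpr ⟨hv, hmmem⟩
    have hNeq := hordN v hv
    constructor
    · intro hceq
      apply (hb ((Mv v).min' (hMvne v hv))).choose_spec
      exact Finset.mem_biUnion.mpr ⟨v, hvSfP, Finset.mem_union_left _
        (Finset.mem_filter.mpr ⟨Finset.mem_univ _, by rw [← hNeq]; exact hceq⟩)⟩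
    · intro hceq
      apply (hb ((Mv v).min' (hMvne v hv))).choose_spec
      exact Finset.mem_biUnion.mpr ⟨v, hvSfP, Finset.mem_union_right _
        (Finset.mem_filter.mpr ⟨Finset.mem_univ _, by rw [← hNeq]; exact hceq⟩)⟩
  -- infinite places: choose j₀
  rcases Nat.eq_zero_or_pos (constCard p K) with h0 | h0
  · refine ⟨β, ⟨0, by omega⟩, ?_⟩
    intro i
    exact absurd i.isLt (by omega)
  set i₀ : Fin (constCard p K) := ⟨0, h0⟩ with hi₀
  set A : Fin I.s → ℤ := fun ℓ => I.ord ℓ (N * X) with hA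
  set B : Fin I.s → ℤ := fun ℓ => I.ord ℓ (N * Y) - I.ord ℓ X with hB
  set BadJ : Finset (Fin (2 * I.s + 1)) := Finset.univ.biUnion (fun ℓ : Fin I.s =>
    (Finset.univ.filter fun j =>
      I.ord ℓ (algebraMap (Polynomial (ZMod p)) K (Q i₀ j)) = A ℓ) ∪
    (Finset.univ.filter fun j =>
      I.ord ℓ (algebraMap (Polynomial (ZMod p)) K (Q i₀ j)) = B ℓ)) with hBadJ
  have hBadJcard : BadJ.card ≤ 2 * I.s := by
    have hone : ∀ (ℓ : Fin I.s) (t : ℤ),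
        (Finset.univ.filter fun j =>
          I.ord ℓ (algebraMap (Polynomial (ZMod p)) K (Q i₀ j)) = t).card ≤ 1 := by
      intro ℓ t
      apply Finset.card_le_one.mpr
      intro j hj j' hj'
      rw [Finset.mem_filter] at hj hj'
      by_contra hne
      exact ord_aK_ne_of_deg_ne p K I ℓ (hQne i₀ j) (hQne i₀ j')
        (hQdeg₂ i₀ j j' hne) (hj.2.trans hj'.2.symm)
    calc BadJ.card ≤ ∑ ℓ : Fin I.s,
        ((Finset.univ.filter fun j =>
          I.ord ℓ (algebraMap (Polynomial (ZMod p)) K (Q i₀ j)) = A ℓ) ∪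
        (Finset.univ.filter fun j =>
          I.ord ℓ (algebraMap (Polynomial (ZMod p)) K (Q i₀ j)) = B ℓ)).card :=
          Finset.card_biUnion_le
      _ ≤ ∑ _ℓ : Fin I.s, 2 := by
          apply Finset.sum_le_sum
          intro ℓ _
          calc _ ≤ _ := Finset.card_union_le _ _
            _ ≤ 2 := by
              have := hone ℓ (A ℓ)
              have := hone ℓ (B ℓ)
              omega
      _ = 2 * I.s := by
          rw [Finset.sum_const, smul_eq_mul, Finset.card_univ, Fintype.card_fin, mul_comm]
  have hj0 : ∃ j₀ : Fin (2 * I.s + 1), j₀ ∉ BadJ := by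
    by_contra h
    push_neg at h
    have hsub : (Finset.univ : Finset (Fin (2 * I.s + 1))) ⊆ BadJ := fun j _ => h j
    have := Finset.card_le_card hsub
    rw [Finset.card_univ, Fintype.card_fin] at this
    omega
  obtain ⟨j₀, hj₀⟩ := hj0
  rw [hBadJ, Finset.mem_biUnion] at hj₀
  push_neg at hj₀
  refine ⟨β, j₀, ?_⟩
  intro i
  constructor
  · -- finite places
    intro v hv
    rw [← hN]
    obtain ⟨hne1, hne2⟩ := hfin1 v hv
    have hQ0 : ordAt v (algebraMap (Polynomial (ZMod p)) K (Q i j₀)) = 0 :=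
      ordAt_aK_eq_zero p K v (hQne i j₀) (hQnb i j₀ v hv)
    constructor
    · rw [ordAt_mul' v hNne hX, hQ0]
      omega
    · rw [ordAt_mul' v hNne hY,
        ordAt_mul' v (aK_ne_zero p K (hQne i j₀)) hX, hQ0]
      omega
  · -- infinite places
    intro ℓ
    rw [← hN]
    have hℓ := hj₀ ℓ (Finset.mem_univ ℓ)
    rw [Finset.mem_union] at hℓ
    push_neg at hℓ
    obtain ⟨h4, h5⟩ := hℓ
    rw [Finset.mem_filter] at h4 h5
    push_neg at h4 h5
    have h4' := h4 (Finset.mem_univ _)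
    have h5' := h5 (Finset.mem_univ _)
    have hdeq : I.ord ℓ (algebraMap (Polynomial (ZMod p)) K (Q i j₀)) =
        I.ord ℓ (algebraMap (Polynomial (ZMod p)) K (Q i₀ j₀)) :=
      ord_aK_eq_of_deg_eq p K I ℓ (hQne i j₀) (hQne i₀ j₀) (hQdeg₁ i i₀ j₀)
    constructor
    · rw [hdeq]
      intro hc
      exact h4' (by rw [← hc, hA])
    · rw [I.ord_mul ℓ _ X (aK_ne_zero p K (hQne i j₀)) hX, hdeq]
      intro hc
      apply h5'
      rw [hB]
      simp only []
      omega

end FunctionFieldSetting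


end Paper
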